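/- Let ρ(l) = l - 5al³ + 10a²l⁵ with a > 0 and K(l) = -ρ''(l)/ρ(l). Then K is strictly decreasing on (0, 1/√(5a)]; equivalently K'(l) < 0 on that interval. -/

import Mathlib

/-- For `ρ(l) = l - 5al³ + 10a²l⁵` with `a > 0` and `K(l) = -ρ''(l)/ρ(l)`,
the curvature `K` is strictly decreasing on `(0, 1/√(5a)]`; equivalently
`K'(l) < 0` there. -/
theorem stmt3 (a : ℝ) (ha : 0 < a) :
    let ρ : ℝ → ℝ := fun l => l - 5 * a * l ^ 3 + 10 * a ^ 2 * l ^ 5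
    let K : ℝ → ℝ := fun l => -(iteratedDeriv 2 ρ l) / ρ l
    StrictAntiOn K (Set.Ioc (0 : ℝ) (1 / Real.sqrt (5 * a))) ∧
    (∀ l ∈ Set.Ioc (0 : ℝ) (1 / Real.sqrt (5 * a)), deriv K l < 0) := by
  intro ρ K
  have hρ' : ∀ l : ℝ, HasDerivAt ρ (1 - 15*a*l^2 + 50*a^2*l^4) l := by
    intro l
    have h := ((hasDerivAt_id l).sub ((hasDerivAt_pow 3 l).const_mul (5*a))).add
        ((hasDerivAt_pow 5 l).const_mul (10*a^2))
    refine h.congr_deriv ?_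
    push_cast; ring
  have hρ'eq : deriv ρ = fun l => 1 - 15*a*l^2 + 50*a^2*l^4 := by
    funext l; exact (hρ' l).deriv
  have hρ'' : ∀ l : ℝ, HasDerivAt (deriv ρ) (-30*a*l + 200*a^2*l^3) l := by
    intro l
    rw [hρ'eq]
    have h := (((hasDerivAt_pow 2 l).const_mul (15*a)).const_sub 1).add
        ((hasDerivAt_pow 4 l).const_mul (50*a^2))
    refine h.congr_deriv ?_
    push_cast; ring
  have hK : K = fun l => (30*a*l - 200*a^2*l^3) / ρ l := by
    funext l
    show -(iteratedDeriv 2 ρ l) / ρ l = _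
    rw [show (2:ℕ) = 1 + 1 from rfl, iteratedDeriv_succ, iteratedDeriv_one,
      (hρ'' l).deriv]
    ring_nf
  -- positivity of ρ on (0, ∞)
  have hρpos : ∀ l : ℝ, 0 < l → 0 < ρ l := by
    intro l hl
    show 0 < l - 5 * a * l ^ 3 + 10 * a ^ 2 * l ^ 5
    nlinarith [sq_nonneg (2*a*l^2 - 1/2), mul_pos hl (mul_pos ha hl), sq_nonneg l,
      mul_pos (mul_pos hl hl) hl]
  set b := 1 / Real.sqrt (5 * a) with hb
  have h5a : (0:ℝ) < 5 * a := by linarith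
  have hsq : Real.sqrt (5*a) > 0 := Real.sqrt_pos.mpr h5a
  have hbound : ∀ l : ℝ, 0 < l → l ≤ b → a * l ^ 2 ≤ 1/5 := by
    intro l hl hlb
    have h1 : l^2 ≤ b^2 := by nlinarith
    have h2 : b^2 = 1/(5*a) := by
      rw [hb, div_pow, one_pow, Real.sq_sqrt h5a.le]
    rw [h2] at h1
    have h3 : l^2 * (5*a) ≤ 1 := (le_div_iff₀ h5a).mp h1
    nlinarith
  -- derivative of K is negative on the interval
  have hderiv : ∀ l ∈ Set.Ioc (0:ℝ) b, deriv K l < 0 := by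
    intro l hl
    obtain ⟨hl0, hlb⟩ := hl
    have hρne : ρ l ≠ 0 := (hρpos l hl0).ne'
    have hN : HasDerivAt (fun x : ℝ => 30*a*x - 200*a^2*x^3) (30*a - 600*a^2*l^2) l := by
      have h := ((hasDerivAt_id l).const_mul (30*a)).sub
        ((hasDerivAt_pow 3 l).const_mul (200*a^2))
      refine h.congr_deriv ?_
      push_cast; ring
    have hD := hρ' l
    have hKd : HasDerivAt K (((30*a - 600*a^2*l^2) * ρ l -
        (30*a*l - 200*a^2*l^3) * (1 - 15*a*l^2 + 50*a^2*l^4)) / (ρ l)^2) l := by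
      rw [hK]
      exact hN.div hD hρne
    rw [hKd.deriv]
    apply div_neg_of_neg_of_pos
    · have key : (30*a - 600*a^2*l^2) * ρ l -
          (30*a*l - 200*a^2*l^3) * (1 - 15*a*l^2 + 50*a^2*l^4)
          = 100*a^2*l^3*(40*a^2*l^4 - 12*a*l^2 - 1) := by
        show (30*a - 600*a^2*l^2) * (l - 5 * a * l ^ 3 + 10 * a ^ 2 * l ^ 5) - _ = _
        ring
      rw [key]
      have ht := hbound l hl0 hlb
      have htpos : 0 < a * l^2 := by positivity
      have hfac : 40*a^2*l^4 - 12*a*l^2 - 1 < 0 := by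
        nlinarith [mul_nonneg (sub_nonneg.mpr ht) htpos.le]
      have hpos : 0 < 100*a^2*l^3 := by positivity
      nlinarith
    · exact pow_pos (hρpos l hl0) 2
  constructor
  · apply strictAntiOn_of_deriv_neg (convex_Ioc 0 b)
    · rw [hK]
      apply ContinuousOn.div
      · fun_prop
      · fun_prop
      · intro x hx
        exact (hρpos x hx.1).ne'
    · intro x hx
      rw [interior_Ioc] at hx
      exact hderiv x ⟨hx.1, hx.2.le⟩
  · exact hderiv
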